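/- Let m, n ≥ 1 be integers. Then the assignment x ↦ b a^n, y ↦ a induces a group isomorphism from G_{m,n} = Gp⟨x, y | x^m y^n x^m y^{-n} = 1⟩ onto the positive one-relator group M_{m,n} = Gp⟨a, b | (b a^n)^m (a^n b)^m = 1⟩. In particular, G_{m,n} is a positive one-relator group. -/

import Mathlib

/-- The single relator `x^m y^n x^m y^{-n}` of the group `G_{m,n}`, where `x` is the
generator `0` and `y` is the generator `1`. -/
def gmnRels (m n : ℕ) : Set (FreeGroup (Fin 2)) :=
  {(FreeGroup.of 0) ^ m * (FreeGroup.of 1) ^ n * (FreeGroup.of 0) ^ m *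
    ((FreeGroup.of 1) ^ n)⁻¹}

/-- The one-relator group `G_{m,n} = Gp⟨x, y | x^m y^n x^m y^{-n} = 1⟩`. -/
abbrev Gmn (m n : ℕ) := PresentedGroup (gmnRels m n)

/-- The generator `x` of `G_{m,n}`. -/
def Gmn.x (m n : ℕ) : Gmn m n := PresentedGroup.of 0

/-- The generator `y` of `G_{m,n}`. -/
def Gmn.y (m n : ℕ) : Gmn m n := PresentedGroup.of 1

/-- The single positive relator `(b a^n)^m (a^n b)^m` of `M_{m,n}`, where `a` is the
generator `0` and `b` is the generator `1`. -/
def mmnRels (m n : ℕ) : Set (FreeGroup (Fin 2)) :=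
  {(FreeGroup.of 1 * (FreeGroup.of 0) ^ n) ^ m *
    ((FreeGroup.of 0) ^ n * FreeGroup.of 1) ^ m}

/-- The positive one-relator group `M_{m,n} = Gp⟨a, b | (b a^n)^m (a^n b)^m = 1⟩`. -/
abbrev Mmn (m n : ℕ) := PresentedGroup (mmnRels m n)

/-- The generator `a` of `M_{m,n}`. -/
def Mmn.a (m n : ℕ) : Mmn m n := PresentedGroup.of 0

/-- The generator `b` of `M_{m,n}`. -/
def Mmn.b (m n : ℕ) : Mmn m n := PresentedGroup.of 1

private lemma conj_pow'' {G : Type*} [Group G] (g h : G) (k : ℕ) :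
    (g * h * g⁻¹) ^ k = g * h ^ k * g⁻¹ := by
  induction k with
  | zero => simp
  | succ i ih => rw [pow_succ, ih, pow_succ]; group

private lemma mmn_rel (m n : ℕ) :
    (Mmn.b m n * (Mmn.a m n) ^ n) ^ m * ((Mmn.a m n) ^ n * Mmn.b m n) ^ m = 1 := by
  have h : QuotientGroup.mk' (Subgroup.normalClosure (mmnRels m n))
      ((FreeGroup.of 1 * (FreeGroup.of 0) ^ n) ^ m *
        ((FreeGroup.of 0) ^ n * FreeGroup.of 1) ^ m) = 1 :=
    (QuotientGroup.eq_one_iff _).2 (Subgroup.subset_normalClosure (Set.mem_singleton _))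
  simpa [map_mul, map_pow, Mmn.a, Mmn.b, PresentedGroup.of] using
    PresentedGroup.one_of_mem (rels := mmnRels m n) (Set.mem_singleton _)

private lemma gmn_rel (m n : ℕ) :
    (Gmn.x m n) ^ m * (Gmn.y m n) ^ n * (Gmn.x m n) ^ m * ((Gmn.y m n) ^ n)⁻¹ = 1 := by
  have h : QuotientGroup.mk' (Subgroup.normalClosure (gmnRels m n))
      ((FreeGroup.of 0) ^ m * (FreeGroup.of 1) ^ n * (FreeGroup.of 0) ^ m *
        ((FreeGroup.of 1) ^ n)⁻¹) = 1 :=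
    (QuotientGroup.eq_one_iff _).2 (Subgroup.subset_normalClosure (Set.mem_singleton _))
  simpa [map_mul, map_pow, map_inv, Gmn.x, Gmn.y, PresentedGroup.of] using
    PresentedGroup.one_of_mem (rels := gmnRels m n) (Set.mem_singleton _)

private def gmap (m n : ℕ) : Fin 2 → Mmn m n :=
  ![Mmn.b m n * (Mmn.a m n) ^ n, Mmn.a m n]

private def mmap (m n : ℕ) : Fin 2 → Gmn m n :=
  ![Gmn.y m n, Gmn.x m n * ((Gmn.y m n) ^ n)⁻¹]

private lemma gmap_rel (m n : ℕ) :
    ∀ r ∈ gmnRels m n, FreeGroup.lift (gmap m n) r = 1 := by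
  rintro r rfl
  simp only [map_mul, map_pow, map_inv, FreeGroup.lift_apply_of, gmap]
  simp only [Matrix.cons_val_zero, Matrix.cons_val_one, Matrix.head_cons]
  set a := Mmn.a m n
  set b := Mmn.b m n
  have key : a ^ n * (b * a ^ n) ^ m * (a ^ n)⁻¹ = (a ^ n * b) ^ m := by
    rw [← conj_pow'' (a ^ n) (b * a ^ n) m]
    congr 1
    group
  calc (b * a ^ n) ^ m * a ^ n * (b * a ^ n) ^ m * (a ^ n)⁻¹
      = (b * a ^ n) ^ m * (a ^ n * (b * a ^ n) ^ m * (a ^ n)⁻¹) := by group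
    _ = (b * a ^ n) ^ m * (a ^ n * b) ^ m := by rw [key]
    _ = 1 := mmn_rel m n

private lemma mmap_rel (m n : ℕ) :
    ∀ r ∈ mmnRels m n, FreeGroup.lift (mmap m n) r = 1 := by
  rintro r rfl
  simp only [map_mul, map_pow, FreeGroup.lift_apply_of, mmap]
  simp only [Matrix.cons_val_zero, Matrix.cons_val_one, Matrix.head_cons]
  set x := Gmn.x m n
  set y := Gmn.y m n
  have h1 : (x * (y ^ n)⁻¹ * y ^ n) ^ m = x ^ m := by
    congr 1; group
  have key : (y ^ n * (x * (y ^ n)⁻¹)) ^ m = y ^ n * x ^ m * (y ^ n)⁻¹ := by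
    rw [← conj_pow'' (y ^ n) x m]
    congr 1
    group
  rw [h1, key]
  calc x ^ m * (y ^ n * x ^ m * (y ^ n)⁻¹)
      = x ^ m * y ^ n * x ^ m * (y ^ n)⁻¹ := by group
    _ = 1 := gmn_rel m n

theorem gmn_is_positive_one_relator (m n : ℕ) (hm : 1 ≤ m) (hn : 1 ≤ n) :
    ∃ e : Gmn m n ≃* Mmn m n,
      e (Gmn.x m n) = Mmn.b m n * (Mmn.a m n) ^ n ∧
      e (Gmn.y m n) = Mmn.a m n := by
  let f : Gmn m n →* Mmn m n := PresentedGroup.toGroup (gmap_rel m n)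
  let g : Mmn m n →* Gmn m n := PresentedGroup.toGroup (mmap_rel m n)
  have hf0 : f (Gmn.x m n) = Mmn.b m n * (Mmn.a m n) ^ n :=
    PresentedGroup.toGroup.of (gmap_rel m n)
  have hf1 : f (Gmn.y m n) = Mmn.a m n :=
    PresentedGroup.toGroup.of (gmap_rel m n)
  have hg0 : g (Mmn.a m n) = Gmn.y m n :=
    PresentedGroup.toGroup.of (mmap_rel m n)
  have hg1 : g (Mmn.b m n) = Gmn.x m n * ((Gmn.y m n) ^ n)⁻¹ :=
    PresentedGroup.toGroup.of (mmap_rel m n)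
  have hgf : g.comp f = MonoidHom.id _ := by
    apply PresentedGroup.ext
    intro i
    fin_cases i
    · show g (f (Gmn.x m n)) = Gmn.x m n
      rw [hf0, map_mul, map_pow, hg0, hg1]
      group
    · show g (f (Gmn.y m n)) = Gmn.y m n
      rw [hf1, hg0]
  have hfg : f.comp g = MonoidHom.id _ := by
    apply PresentedGroup.ext
    intro i
    fin_cases i
    · show f (g (Mmn.a m n)) = Mmn.a m n
      rw [hg0, hf1]
    · show f (g (Mmn.b m n)) = Mmn.b m n
      rw [hg1, map_mul, map_inv, map_pow, hf0, hf1]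
      group
  exact ⟨MonoidHom.toMulEquiv f g hgf hfg, hf0, hf1⟩
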